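/- The bivariate type-B Eulerian polynomial B_n(s,t) = Σ_{π ∈ B_n} t^{des_B(π)} s^{n - des_B(π)} satisfies the recurrence B_{n+1}(s,t) = (s+t)·B_n(s,t) + 2st·(∂/∂s + ∂/∂t) B_n(s,t), and is gamma positive: B_n(s,t) = Σ_{i=0}^{⌊n/2⌋} γ^B_{n,i} (st)^i (s+t)^{n-2i} with nonnegative integers γ^B_{n,i} satisfying γ^B_{n+1,i} = (2i+1)γ^B_{n,i} + 4(n-2i+2)γ^B_{n,i-1}. -/

import Mathlib

open Finset

/-- number of descents of a permutation of `Fin n` (one-line notation). -/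
def desA {n : ℕ} (π : Equiv.Perm (Fin n)) : ℕ :=
  (Finset.univ.filter (fun i : Fin (n-1) =>
    π ⟨i.1+1, by have := i.2; omega⟩ < π ⟨i.1, by have := i.2; omega⟩)).card

/-- number of ascents. -/
def ascA {n : ℕ} (π : Equiv.Perm (Fin n)) : ℕ :=
  (Finset.univ.filter (fun i : Fin (n-1) =>
    π ⟨i.1, by have := i.2; omega⟩ < π ⟨i.1+1, by have := i.2; omega⟩)).card

/-- number of inversions. -/
def invA {n : ℕ} (π : Equiv.Perm (Fin n)) : ℕ :=
  (Finset.univ.filter (fun p : Fin n × Fin n => p.1 < p.2 ∧ π p.2 < π p.1)).card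

/-- bivariate Eulerian polynomial over all of `S_n`; variable 0 is `s`, variable 1 is `t`. -/
noncomputable def Abiv (n : ℕ) : MvPolynomial (Fin 2) ℚ :=
  ∑ π : Equiv.Perm (Fin n), MvPolynomial.X 1 ^ desA π * MvPolynomial.X 0 ^ ascA π

noncomputable def AbivP (n : ℕ) : MvPolynomial (Fin 2) ℚ :=
  ∑ π ∈ Finset.univ.filter (fun π : Equiv.Perm (Fin n) => Equiv.Perm.sign π = 1),
    MvPolynomial.X 1 ^ desA π * MvPolynomial.X 0 ^ ascA π

noncomputable def AbivM (n : ℕ) : MvPolynomial (Fin 2) ℚ :=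
  ∑ π ∈ Finset.univ.filter (fun π : Equiv.Perm (Fin n) => Equiv.Perm.sign π = -1),
    MvPolynomial.X 1 ^ desA π * MvPolynomial.X 0 ^ ascA π

noncomputable def Auni (n : ℕ) : Polynomial ℚ :=
  ∑ π : Equiv.Perm (Fin n), Polynomial.X ^ desA π

noncomputable def AuniP (n : ℕ) : Polynomial ℚ :=
  ∑ π ∈ Finset.univ.filter (fun π : Equiv.Perm (Fin n) => Equiv.Perm.sign π = 1),
    Polynomial.X ^ desA π

noncomputable def AuniM (n : ℕ) : Polynomial ℚ :=
  ∑ π ∈ Finset.univ.filter (fun π : Equiv.Perm (Fin n) => Equiv.Perm.sign π = -1),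
    Polynomial.X ^ desA π

/-- the operator `∂/∂s + ∂/∂t`. -/
noncomputable def Dop (f : MvPolynomial (Fin 2) ℚ) : MvPolynomial (Fin 2) ℚ :=
  MvPolynomial.pderiv 0 f + MvPolynomial.pderiv 1 f

/-- A univariate polynomial is palindromic: with `r` the least exponent with nonzero
coefficient and `n` the degree, `a_{r+i} = a_{n-i}`. -/
def Palind (f : Polynomial ℚ) : Prop :=
  ∀ i ≤ f.natDegree - f.natTrailingDegree,
    f.coeff (f.natTrailingDegree + i) = f.coeff (f.natDegree - i)

/-- bivariate gamma positivity with center of symmetry `N/2`. -/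
def BivGamma (f : MvPolynomial (Fin 2) ℚ) (N : ℕ) : Prop :=
  ∃ γ : ℕ → ℕ, (∀ i, γ i ≠ 0 → 2*i ≤ N) ∧
    f = ∑ i ∈ Finset.range (N+1), (γ i : MvPolynomial (Fin 2) ℚ) *
      ((MvPolynomial.X 0 * MvPolynomial.X 1)^i * (MvPolynomial.X 0 + MvPolynomial.X 1)^(N - 2*i))

/-- univariate gamma positivity with center of symmetry `c2/2`. -/
def UniGamma (f : Polynomial ℚ) (c2 : ℕ) : Prop :=
  ∃ γ : ℕ → ℕ, (∀ i, γ i ≠ 0 → 2*i ≤ c2) ∧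
    f = ∑ i ∈ Finset.range (c2+1), (γ i : ℚ) •
      (Polynomial.X^i * (1 + Polynomial.X)^(c2 - 2*i))

/-- signed permutations: a permutation together with a sign for each position. -/
abbrev SignedPerm (n : ℕ) := Equiv.Perm (Fin n) × (Fin n → Bool)

/-- the one-line word of a signed permutation, 1-indexed, with `bw w 0 = 0`;
entry `i` is `±(w.1 i + 1)` viewed in `{-n,…,-1,1,…,n}`. -/
def bw {n : ℕ} (w : SignedPerm n) (i : ℕ) : ℤ :=
  if h : 1 ≤ i ∧ i ≤ n then
    (if w.2 ⟨i-1, by omega⟩ then -(((w.1 ⟨i-1, by omega⟩ : ℕ) : ℤ) + 1)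
     else ((w.1 ⟨i-1, by omega⟩ : ℕ) : ℤ) + 1)
  else 0

/-- type-B descents (including a possible descent at position 0). -/
def desB {n : ℕ} (w : SignedPerm n) : ℕ :=
  ((Finset.range n).filter (fun i => bw w (i+1) < bw w i)).card

/-- type-B inversions (length). -/
def invB {n : ℕ} (w : SignedPerm n) : ℕ :=
  (Finset.univ.filter (fun p : Fin n × Fin n => p.1 < p.2 ∧ bw w (p.2.1+1) < bw w (p.1.1+1))).card
  + (Finset.univ.filter (fun p : Fin n × Fin n => p.1 < p.2 ∧ bw w (p.2.1+1) < -(bw w (p.1.1+1)))).card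
  + (Finset.univ.filter (fun i : Fin n => bw w (i.1+1) < 0)).card

/-- type-D inversions. -/
def invD {n : ℕ} (w : SignedPerm n) : ℕ :=
  (Finset.univ.filter (fun p : Fin n × Fin n => p.1 < p.2 ∧ bw w (p.2.1+1) < bw w (p.1.1+1))).card
  + (Finset.univ.filter (fun p : Fin n × Fin n => p.1 < p.2 ∧ bw w (p.2.1+1) < -(bw w (p.1.1+1)))).card

noncomputable def Bbiv (n : ℕ) : MvPolynomial (Fin 2) ℚ :=
  ∑ w : SignedPerm n, MvPolynomial.X 1 ^ desB w * MvPolynomial.X 0 ^ (n - desB w)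

noncomputable def BbivP (n : ℕ) : MvPolynomial (Fin 2) ℚ :=
  ∑ w ∈ Finset.univ.filter (fun w : SignedPerm n => Even (invB w)),
    MvPolynomial.X 1 ^ desB w * MvPolynomial.X 0 ^ (n - desB w)

noncomputable def BbivM (n : ℕ) : MvPolynomial (Fin 2) ℚ :=
  ∑ w ∈ Finset.univ.filter (fun w : SignedPerm n => ¬ Even (invB w)),
    MvPolynomial.X 1 ^ desB w * MvPolynomial.X 0 ^ (n - desB w)

noncomputable def BuniP (n : ℕ) : Polynomial ℚ :=
  ∑ w ∈ Finset.univ.filter (fun w : SignedPerm n => Even (invB w)), Polynomial.X ^ desB w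

noncomputable def BuniM (n : ℕ) : Polynomial ℚ :=
  ∑ w ∈ Finset.univ.filter (fun w : SignedPerm n => ¬ Even (invB w)), Polynomial.X ^ desB w

/-- deleting the largest letter from the one-line notation of `π ∈ S_{n+1}`
gives a permutation of `[n]`. -/
noncomputable def restrictMax {n : ℕ} (π : Equiv.Perm (Fin (n+1))) : Equiv.Perm (Fin n) :=
  Equiv.ofBijective
    (fun i => Fin.castPred (π ((π.symm (Fin.last n)).succAbove i))
      (by
        intro h
        have h2 : (π.symm (Fin.last n)).succAbove i = π.symm (Fin.last n) := by
          apply π.injective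
          rw [h, Equiv.apply_symm_apply]
        exact Fin.succAbove_ne _ i h2))
    (Finite.injective_iff_bijective.mp (by
      intro i j h
      have h2 : π ((π.symm (Fin.last n)).succAbove i) = π ((π.symm (Fin.last n)).succAbove j) :=
        Fin.castPred_inj.mp h
      have h3 := π.injective h2
      exact Fin.succAbove_right_injective h3))

/-- number of even permutations of `[n]` with `k` descents (`k : ℤ`). -/
noncomputable def aP (n : ℕ) (k : ℤ) : ℕ :=
  (Finset.univ.filter (fun π : Equiv.Perm (Fin n) =>
    Equiv.Perm.sign π = 1 ∧ (desA π : ℤ) = k)).card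

/-- number of odd permutations of `[n]` with `k` descents. -/
noncomputable def aM (n : ℕ) (k : ℤ) : ℕ :=
  (Finset.univ.filter (fun π : Equiv.Perm (Fin n) =>
    Equiv.Perm.sign π = -1 ∧ (desA π : ℤ) = k)).card

namespace TypeBAux

open MvPolynomial

variable {n : ℕ}

def insFun (π : Equiv.Perm (Fin n)) (p : Fin (n+1)) (j : Fin (n+1)) : Fin (n+1) :=
  if h : j.1 < p.1 then Fin.castSucc (π ⟨j.1, by have := p.2; omega⟩)
  else if h2 : j.1 = p.1 then Fin.last n
  else Fin.castSucc (π ⟨j.1 - 1, by have := j.2; omega⟩)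

lemma insFun_injective (π : Equiv.Perm (Fin n)) (p : Fin (n+1)) :
    Function.Injective (insFun π p) := by
  intro j j' heq
  unfold insFun at heq
  apply Fin.ext
  split_ifs at heq with h1 h2 h3 h4 h5 h6 h7 h8
  · have h9 := Fin.mk_eq_mk.mp (π.injective (Fin.castSucc_injective _ heq)); omega
  · exact absurd heq (Fin.castSucc_lt_last _).ne
  · have h9 := Fin.mk_eq_mk.mp (π.injective (Fin.castSucc_injective _ heq)); omega
  · exact absurd heq (Fin.castSucc_lt_last _).ne'
  · omega
  · exact absurd heq (Fin.castSucc_lt_last _).ne'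
  · have h9 := Fin.mk_eq_mk.mp (π.injective (Fin.castSucc_injective _ heq)); omega
  · exact absurd heq (Fin.castSucc_lt_last _).ne
  · have h9 := Fin.mk_eq_mk.mp (π.injective (Fin.castSucc_injective _ heq)); omega

noncomputable def insPerm (π : Equiv.Perm (Fin n)) (p : Fin (n+1)) : Equiv.Perm (Fin (n+1)) :=
  Equiv.ofBijective _ (Finite.injective_iff_bijective.mp (insFun_injective π p))

def signFun (w : SignedPerm n) (p : Fin (n+1)) (ε : Bool) (j : Fin (n+1)) : Bool :=
  if h : j.1 < p.1 then w.2 ⟨j.1, by have := p.2; omega⟩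
  else if h2 : j.1 = p.1 then ε
  else w.2 ⟨j.1 - 1, by have := j.2; omega⟩

noncomputable def ins (w : SignedPerm n) (p : Fin (n+1)) (ε : Bool) : SignedPerm (n+1) :=
  (insPerm w.1 p, signFun w p ε)

lemma bw_ins (w : SignedPerm n) (p : Fin (n+1)) (ε : Bool) (j : ℕ) :
    bw (ins w p ε) j =
      if j = p.1 + 1 then (if ε then -((n:ℤ)+1) else (n:ℤ)+1)
      else if j ≤ p.1 then bw w j else bw w (j-1) := by
  have hp := p.2
  unfold bw ins signFun
  simp only [insPerm, Equiv.ofBijective_apply]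
  unfold insFun
  by_cases hj1 : 1 ≤ j ∧ j ≤ n + 1
  · rw [dif_pos hj1]
    by_cases hjp : j = p.1 + 1
    · have hlt : ¬ (j - 1 < p.1) := by omega
      have heq : j - 1 = p.1 := by omega
      rw [dif_neg hlt, dif_pos heq, dif_neg hlt, dif_pos heq, if_pos hjp]
      cases ε <;> simp [Fin.val_last]
    · rw [if_neg hjp]
      by_cases hle : j ≤ p.1
      · have hlt : j - 1 < p.1 := by omega
        rw [dif_pos hlt, dif_pos hlt, if_pos hle, dif_pos (show 1 ≤ j ∧ j ≤ n by omega)]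
        simp
      · have hlt : ¬ (j - 1 < p.1) := by omega
        have hne : ¬ (j - 1 = p.1) := by omega
        rw [dif_neg hlt, dif_neg hne, dif_neg hlt, dif_neg hne, if_neg hle,
          dif_pos (show 1 ≤ j - 1 ∧ j - 1 ≤ n by omega)]
        simp
  · rw [dif_neg hj1]
    by_cases h2 : j = 0
    · subst h2
      rw [if_neg (by omega), if_pos (by omega), dif_neg (by omega)]
    · rw [if_neg (by omega), if_neg (by omega), dif_neg (by omega)]

lemma bw_bound (w : SignedPerm n) (j : ℕ) : -(n:ℤ) ≤ bw w j ∧ bw w j ≤ n := by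
  unfold bw
  split_ifs with h h2
  · have := (w.1 ⟨j-1, by omega⟩).2
    constructor <;> [skip; omega] <;> push_cast <;> omega
  · have := (w.1 ⟨j-1, by omega⟩).2
    constructor <;> push_cast <;> omega
  · simp

lemma desB_le (w : SignedPerm n) : desB w ≤ n := by
  unfold desB
  exact le_trans (Finset.card_filter_le _ _) (by simp)

lemma desB_eq_sum (m : ℕ) (w : SignedPerm m) :
    desB w = ∑ i ∈ Finset.range m, (if bw w (i+1) < bw w i then 1 else 0) := by
  unfold desB
  rw [Finset.card_filter]

lemma bw_ins_new (w : SignedPerm n) (p : Fin (n+1)) (ε : Bool) :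
    bw (ins w p ε) (p.1+1) = if ε then -((n:ℤ)+1) else (n:ℤ)+1 := by
  rw [bw_ins, if_pos rfl]

lemma bw_ins_low (w : SignedPerm n) (p : Fin (n+1)) (ε : Bool) {j : ℕ} (h : j ≤ p.1) :
    bw (ins w p ε) j = bw w j := by
  rw [bw_ins, if_neg (by omega), if_pos h]

lemma bw_ins_high (w : SignedPerm n) (p : Fin (n+1)) (ε : Bool) {j : ℕ} (h : p.1 + 1 < j) :
    bw (ins w p ε) j = bw w (j-1) := by
  rw [bw_ins, if_neg (by omega), if_neg (by omega)]

lemma desB_ins_last (w : SignedPerm n) (p : Fin (n+1)) (ε : Bool) (hp : p.1 = n) :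
    desB (ins w p ε) = desB w + (if ε then 1 else 0) := by
  rw [desB_eq_sum, desB_eq_sum, Finset.sum_range_succ]
  have hlow : ∀ i ∈ Finset.range n,
      (if bw (ins w p ε) (i+1) < bw (ins w p ε) i then 1 else 0)
      = (if bw w (i+1) < bw w i then 1 else 0) := by
    intro i hi
    rw [Finset.mem_range] at hi
    rw [bw_ins_low w p ε (by omega), bw_ins_low w p ε (by omega)]
  rw [Finset.sum_congr rfl hlow]
  congr 1
  have h2 := bw_ins_new w p ε
  rw [hp] at h2
  rw [h2, bw_ins_low w p ε (by omega)]
  have hb := bw_bound w n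
  cases ε
  · rw [if_neg (by simp; omega)]; simp
  · rw [if_pos (by simp; omega)]; simp

lemma desB_ins_mid (w : SignedPerm n) (p : Fin (n+1)) (ε : Bool) (hp : p.1 < n) :
    desB (ins w p ε) + (if bw w (p.1+1) < bw w p.1 then 1 else 0) = desB w + 1 := by
  rw [desB_eq_sum, desB_eq_sum]
  rw [Finset.range_eq_Ico, Finset.range_eq_Ico,
    ← Finset.sum_Ico_consecutive _ (Nat.zero_le p.1) (by omega : p.1 ≤ n + 1),
    ← Finset.sum_Ico_consecutive _ (Nat.zero_le p.1) (by omega : p.1 ≤ n),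
    Finset.sum_eq_sum_Ico_succ_bot (by omega : p.1 < n + 1),
    Finset.sum_eq_sum_Ico_succ_bot (by omega : p.1 + 1 < n + 1),
    Finset.sum_eq_sum_Ico_succ_bot (by omega : p.1 < n)]
  have hlow : ∀ i ∈ Finset.Ico 0 p.1,
      (if bw (ins w p ε) (i+1) < bw (ins w p ε) i then 1 else 0)
      = (if bw w (i+1) < bw w i then 1 else 0) := by
    intro i hi
    rw [Finset.mem_Ico] at hi
    rw [bw_ins_low w p ε (by omega), bw_ins_low w p ε (by omega)]
  have hhigh : ∑ i ∈ Finset.Ico (p.1+2) (n+1),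
      (if bw (ins w p ε) (i+1) < bw (ins w p ε) i then 1 else 0)
      = ∑ i ∈ Finset.Ico (p.1+1) n, (if bw w (i+1) < bw w i then 1 else 0) := by
    rw [Finset.sum_Ico_eq_sum_range, Finset.sum_Ico_eq_sum_range]
    apply Finset.sum_congr (by congr 1; omega)
    intro i hi
    rw [Finset.mem_range] at hi
    rw [bw_ins_high w p ε (by omega), bw_ins_high w p ε (by omega)]
    have e3 : p.1+2+i-1 = p.1+1+i := by omega
    have e4 : p.1+2+(i+1)-1 = p.1+1+i+1 := by omega
    have e5 : p.1+2+i+1 = p.1+2+(i+1) := by omega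
    rw [e5, e4, e3]
  have hq0 : (if bw (ins w p ε) (p.1+1) < bw (ins w p ε) p.1 then (1:ℕ) else 0)
      + (if bw (ins w p ε) (p.1+1+1) < bw (ins w p ε) (p.1+1) then 1 else 0) = 1 := by
    rw [bw_ins_new, bw_ins_low w p ε le_rfl, bw_ins_high w p ε (by omega)]
    have e5 : p.1+1+1-1 = p.1+1 := by omega
    rw [e5]
    have hb1 := bw_bound w p.1
    have hb2 := bw_bound w (p.1+1)
    cases ε
    · rw [if_neg (by simp; omega), if_pos (by simp; omega)]
    · rw [if_pos (by simp; omega), if_neg (by simp; omega)]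
  rw [Finset.sum_congr rfl hlow, hhigh]
  omega

lemma insFun_self (π : Equiv.Perm (Fin n)) (p : Fin (n+1)) : insFun π p p = Fin.last n := by
  unfold insFun
  rw [dif_neg (lt_irrefl _), dif_pos rfl]

lemma insFun_ne_last (π : Equiv.Perm (Fin n)) (p : Fin (n+1)) (j : Fin (n+1)) (h : j ≠ p) :
    insFun π p j ≠ Fin.last n := by
  unfold insFun
  split_ifs with h1 h2
  · exact (Fin.castSucc_lt_last _).ne
  · exact absurd (Fin.ext h2) h
  · exact (Fin.castSucc_lt_last _).ne

lemma ins_inj :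
    Function.Injective (fun x : SignedPerm n × Fin (n+1) × Bool => ins x.1 x.2.1 x.2.2) := by
  rintro ⟨w, p, ε⟩ ⟨w', p', ε'⟩ h
  simp only [ins, Prod.mk.injEq] at h
  obtain ⟨hperm, hsign⟩ := h
  have hp : p = p' := by
    by_contra hne
    have h1 : insFun w.1 p p = insFun w'.1 p' p := by
      have h2 := congrArg (fun (e : Equiv.Perm (Fin (n+1))) => e p) hperm
      simpa [insPerm] using h2
    rw [insFun_self] at h1
    exact insFun_ne_last w'.1 p' p hne h1.symm
  subst hp
  have hε : ε = ε' := by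
    have h3 := congrFun hsign p
    unfold signFun at h3
    rwa [dif_neg (lt_irrefl _), dif_pos rfl, dif_neg (lt_irrefl _), dif_pos rfl] at h3
  subst hε
  have hw1 : w.1 = w'.1 := by
    apply Equiv.ext
    intro i
    have hin := i.2
    by_cases hi : i.1 < p.1
    · have h4 := congrArg (fun (e : Equiv.Perm (Fin (n+1))) => e ⟨i.1, by omega⟩) hperm
      simp only [insPerm, Equiv.ofBijective_apply] at h4
      unfold insFun at h4
      simp only [dif_pos (show (⟨i.1, by omega⟩ : Fin (n+1)).1 < p.1 from hi)] at h4
      simpa [Fin.castSucc_inj] using h4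
    · have h4 := congrArg (fun (e : Equiv.Perm (Fin (n+1))) => e ⟨i.1+1, by omega⟩) hperm
      simp only [insPerm, Equiv.ofBijective_apply] at h4
      unfold insFun at h4
      simp only [dif_neg (show ¬((⟨i.1+1, by omega⟩ : Fin (n+1)).1 < p.1) by simp; omega),
        dif_neg (show ¬((⟨i.1+1, by omega⟩ : Fin (n+1)).1 = p.1) by simp; omega)] at h4
      simpa [Fin.castSucc_inj] using h4
  have hw2 : w.2 = w'.2 := by
    funext i
    have hin := i.2
    by_cases hi : i.1 < p.1
    · have h4 := congrFun hsign ⟨i.1, by omega⟩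
      unfold signFun at h4
      simpa [dif_pos (show (⟨i.1, by omega⟩ : Fin (n+1)).1 < p.1 from hi)] using h4
    · have h4 := congrFun hsign ⟨i.1+1, by omega⟩
      unfold signFun at h4
      simp only [dif_neg (show ¬((⟨i.1+1, by omega⟩ : Fin (n+1)).1 < p.1) by simp; omega),
        dif_neg (show ¬((⟨i.1+1, by omega⟩ : Fin (n+1)).1 = p.1) by simp; omega)] at h4
      simpa using h4
  simp [Prod.ext_iff, hw1, hw2]

lemma card_signedPerm (m : ℕ) : Fintype.card (SignedPerm m) = Nat.factorial m * 2^m := by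
  rw [Fintype.card_prod, Fintype.card_perm, Fintype.card_fun, Fintype.card_fin,
    Fintype.card_bool]

lemma ins_bij :
    Function.Bijective (fun x : SignedPerm n × Fin (n+1) × Bool => ins x.1 x.2.1 x.2.2) := by
  rw [Fintype.bijective_iff_injective_and_card]
  refine ⟨ins_inj, ?_⟩
  rw [Fintype.card_prod, card_signedPerm, card_signedPerm, Fintype.card_prod,
    Fintype.card_fin, Fintype.card_bool, Nat.factorial_succ, pow_succ]
  ring

lemma key1 (k m : ℕ) :
    (X 0 + X 1) * ((X 1 : MvPolynomial (Fin 2) ℚ)^k * (X 0)^m)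
      + 2*((X 0) * (X 1) * Dop ((X 1)^k * (X 0)^m))
    = ((2*k+1 : ℕ) : MvPolynomial (Fin 2) ℚ) * ((X 1)^k * (X 0)^(m+1))
      + ((2*m+1 : ℕ) : MvPolynomial (Fin 2) ℚ) * ((X 1)^(k+1) * (X 0)^m) := by
  unfold Dop
  rw [pderiv_mul, pderiv_mul, pderiv_pow, pderiv_pow, pderiv_pow, pderiv_pow,
    pderiv_X_self, pderiv_X_self, pderiv_X_of_ne (by decide), pderiv_X_of_ne (by decide)]
  cases k <;> cases m <;> push_cast <;> simp <;> ring

lemma card_filter_des (w : SignedPerm n) :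
    (Finset.univ.filter (fun i : Fin n => bw w (i.1+1) < bw w i.1)).card = desB w := by
  rw [desB_eq_sum, Finset.card_filter,
    ← Fin.sum_univ_eq_sum_range (fun j => if bw w (j+1) < bw w j then (1:ℕ) else 0) n]

lemma fiber_sum (w : SignedPerm n) :
    ∑ p : Fin (n+1), ∑ ε : Bool,
      ((X 1 : MvPolynomial (Fin 2) ℚ) ^ desB (ins w p ε) * X 0 ^ (n+1 - desB (ins w p ε)))
    = ((2*desB w+1 : ℕ) : MvPolynomial (Fin 2) ℚ) * (X 1 ^ desB w * X 0 ^ (n+1-desB w))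
      + ((2*(n-desB w)+1 : ℕ) : MvPolynomial (Fin 2) ℚ)
        * (X 1 ^ (desB w + 1) * X 0 ^ (n-desB w)) := by
  have hk := desB_le w
  set k := desB w with hkdef
  set A : MvPolynomial (Fin 2) ℚ := X 1 ^ k * X 0 ^ (n+1-k) with hA
  set B : MvPolynomial (Fin 2) ℚ := X 1 ^ (k+1) * X 0 ^ (n-k) with hB
  rw [Fin.sum_univ_castSucc]
  have hlast : ∑ ε : Bool,
      ((X 1 : MvPolynomial (Fin 2) ℚ) ^ desB (ins w (Fin.last n) ε)
        * X 0 ^ (n+1 - desB (ins w (Fin.last n) ε))) = B + A := by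
    rw [Fintype.sum_bool, desB_ins_last w (Fin.last n) true (by simp),
      desB_ins_last w (Fin.last n) false (by simp), ← hkdef]
    norm_num
    rw [show n+1-(k+1) = n-k by omega]
  have hmid : ∀ i : Fin n, ∑ ε : Bool,
      ((X 1 : MvPolynomial (Fin 2) ℚ) ^ desB (ins w (Fin.castSucc i) ε)
        * X 0 ^ (n+1 - desB (ins w (Fin.castSucc i) ε)))
      = 2 • (if bw w (i.1+1) < bw w i.1 then A else B) := by
    intro i
    have hdes : ∀ ε : Bool, desB (ins w (Fin.castSucc i) ε)
        = if bw w (i.1+1) < bw w i.1 then k else k+1 := by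
      intro ε
      have h5 := desB_ins_mid w (Fin.castSucc i) ε (by simp [Fin.coe_castSucc])
      rw [Fin.coe_castSucc] at h5
      split_ifs at h5 ⊢ <;> omega
    rw [Fintype.sum_bool, hdes true, hdes false]
    by_cases hc : bw w (i.1+1) < bw w i.1
    · rw [if_pos hc, if_pos hc, two_smul]
    · rw [if_neg hc, if_neg hc, show n+1-(k+1) = n-k by omega, two_smul]
  rw [Finset.sum_congr rfl (fun i _ => hmid i), hlast]
  simp only [smul_ite]
  rw [Finset.sum_ite (fun _ => (2:ℕ) • A) (fun _ => (2:ℕ) • B), Finset.sum_const,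
    Finset.sum_const, card_filter_des, ← hkdef]
  have hcard : (Finset.univ.filter (fun i : Fin n => ¬ bw w (i.1+1) < bw w i.1)).card
      = n - k := by
    have h6 := Finset.card_filter_add_card_filter_not
      (s := (Finset.univ : Finset (Fin n))) (p := fun i : Fin n => bw w (i.1+1) < bw w i.1)
    rw [card_filter_des, ← hkdef] at h6
    simp only [Finset.card_univ, Fintype.card_fin] at h6
    omega
  rw [hcard]
  rw [smul_smul, smul_smul, nsmul_eq_mul, nsmul_eq_mul]
  push_cast
  ring

lemma Dop_sum {α : Type*} (s : Finset α) (f : α → MvPolynomial (Fin 2) ℚ) :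
    Dop (∑ a ∈ s, f a) = ∑ a ∈ s, Dop (f a) := by
  unfold Dop
  rw [map_sum, map_sum, ← Finset.sum_add_distrib]

lemma Bbiv_succ (n : ℕ) :
    Bbiv (n+1) = (X 0 + X 1) * Bbiv n + 2*(X 0 * X 1 * Dop (Bbiv n)) := by
  unfold Bbiv
  have hbij := Fintype.sum_bijective _ (ins_bij (n := n))
    (fun x : SignedPerm n × Fin (n+1) × Bool =>
      (X 1 : MvPolynomial (Fin 2) ℚ) ^ desB (ins x.1 x.2.1 x.2.2)
        * X 0 ^ (n+1 - desB (ins x.1 x.2.1 x.2.2)))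
    (fun w : SignedPerm (n+1) => (X 1 : MvPolynomial (Fin 2) ℚ) ^ desB w * X 0 ^ (n+1 - desB w))
    (fun x => rfl)
  rw [← hbij, Fintype.sum_prod_type]
  rw [Finset.mul_sum, Dop_sum, Finset.mul_sum, Finset.mul_sum, ← Finset.sum_add_distrib]
  apply Finset.sum_congr rfl
  intro w _
  rw [Fintype.sum_prod_type]
  rw [fiber_sum w]
  have hk := desB_le w
  have h1 := key1 (desB w) (n - desB w)
  rw [show n - desB w + 1 = n + 1 - desB w by omega] at h1
  rw [← h1]

def g : ℕ → ℕ → ℕ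
  | 0, 0 => 1
  | 0, _+1 => 0
  | n+1, 0 => g n 0
  | n+1, i+1 => (2*i+3) * g n (i+1) + 4*(n-2*i) * g n i

lemma g_supp : ∀ n i, g n i ≠ 0 → 2*i ≤ n := by
  intro n
  induction n with
  | zero => intro i h; cases i with
    | zero => simp
    | succ j => simp [g] at h
  | succ m ih =>
    intro i h
    cases i with
    | zero => omega
    | succ j =>
      rw [g] at h
      by_cases h1 : g m (j+1) = 0
      · rw [h1, Nat.mul_zero, Nat.zero_add] at h
        have h2 := Nat.mul_ne_zero_iff.mp h
        omega
      · have := ih (j+1) h1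
        omega

lemma key2 (i m : ℕ) :
    (X 0 + X 1) * (((X 0 : MvPolynomial (Fin 2) ℚ) * X 1)^i * (X 0 + X 1)^m)
      + 2*((X 0) * (X 1) * Dop ((X 0 * X 1)^i * (X 0 + X 1)^m))
    = ((2*i+1 : ℕ) : MvPolynomial (Fin 2) ℚ) * ((X 0 * X 1)^i * (X 0 + X 1)^(m+1))
      + ((4*m : ℕ) : MvPolynomial (Fin 2) ℚ) * ((X 0 * X 1)^(i+1) * (X 0 + X 1)^(m-1)) := by
  unfold Dop
  rw [pderiv_mul, pderiv_mul, pderiv_pow, pderiv_pow, pderiv_pow, pderiv_pow,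
    pderiv_mul, pderiv_mul, map_add, map_add,
    pderiv_X_self, pderiv_X_self, pderiv_X_of_ne (by decide), pderiv_X_of_ne (by decide)]
  cases i <;> cases m <;> push_cast <;> simp <;> ring

lemma Dop_natCast_mul (k : ℕ) (f : MvPolynomial (Fin 2) ℚ) :
    Dop ((k : MvPolynomial (Fin 2) ℚ) * f) = (k : MvPolynomial (Fin 2) ℚ) * Dop f := by
  unfold Dop
  rw [← map_natCast (C : ℚ →+* MvPolynomial (Fin 2) ℚ) k, pderiv_C_mul, pderiv_C_mul, mul_add]

lemma Bbiv_zero : Bbiv 0 = 1 := by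
  unfold Bbiv
  have h : ∀ w : SignedPerm 0, desB w = 0 := by
    intro w; unfold desB; simp
  simp only [h, pow_zero, Nat.zero_sub, one_mul]
  rw [Finset.sum_const, Finset.card_univ, card_signedPerm]
  simp

lemma Bbiv_expand (n : ℕ) :
    Bbiv n = ∑ i ∈ Finset.range (n+1), ((g n i : ℕ) : MvPolynomial (Fin 2) ℚ)
      * ((X 0 * X 1)^i * (X 0 + X 1)^(n - 2*i)) := by
  induction n with
  | zero => simp [Bbiv_zero]; rfl
  | succ m ih =>
    rw [Bbiv_succ, ih, Finset.mul_sum, Dop_sum, Finset.mul_sum, Finset.mul_sum,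
      ← Finset.sum_add_distrib]
    have hterm : ∀ i ∈ Finset.range (m+1),
        (X 0 + X 1) * (((g m i : ℕ) : MvPolynomial (Fin 2) ℚ)
            * ((X 0 * X 1)^i * (X 0 + X 1)^(m - 2*i)))
          + 2*(X 0 * X 1 * Dop (((g m i : ℕ) : MvPolynomial (Fin 2) ℚ)
            * ((X 0 * X 1)^i * (X 0 + X 1)^(m - 2*i))))
        = ((g m i : ℕ) : MvPolynomial (Fin 2) ℚ)
            * (((2*i+1 : ℕ) : MvPolynomial (Fin 2) ℚ)
              * ((X 0 * X 1)^i * (X 0 + X 1)^(m + 1 - 2*i)))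
          + ((g m i : ℕ) : MvPolynomial (Fin 2) ℚ)
            * (((4*(m-2*i) : ℕ) : MvPolynomial (Fin 2) ℚ)
              * ((X 0 * X 1)^(i+1) * (X 0 + X 1)^(m + 1 - 2*(i+1)))) := by
      intro i _
      rw [Dop_natCast_mul]
      by_cases hg : g m i = 0
      · rw [hg]; push_cast; ring
      · have h2i := g_supp m i hg
        have e1 : m - 2*i + 1 = m + 1 - 2*i := by omega
        have e2 : m - 2*i - 1 = m + 1 - 2*(i+1) := by omega
        have h3 := key2 i (m - 2*i)
        rw [e1, e2] at h3
        rw [← mul_add, ← h3]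
        ring
    rw [Finset.sum_congr rfl hterm, Finset.sum_add_distrib]
    have hS1 : ∑ i ∈ Finset.range (m+1), ((g m i : ℕ) : MvPolynomial (Fin 2) ℚ)
          * (((2*i+1 : ℕ) : MvPolynomial (Fin 2) ℚ)
            * ((X 0 * X 1)^i * (X 0 + X 1)^(m + 1 - 2*i)))
        = ∑ i ∈ Finset.range (m+2), ((g m i : ℕ) : MvPolynomial (Fin 2) ℚ)
          * (((2*i+1 : ℕ) : MvPolynomial (Fin 2) ℚ)
            * ((X 0 * X 1)^i * (X 0 + X 1)^(m + 1 - 2*i))) := by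
      rw [Finset.sum_range_succ (n := m+1)]
      have : g m (m+1) = 0 := by
        by_contra hg
        have := g_supp m (m+1) hg
        omega
      rw [this]
      push_cast
      ring
    have hS2 : ∑ i ∈ Finset.range (m+1), ((g m i : ℕ) : MvPolynomial (Fin 2) ℚ)
          * (((4*(m-2*i) : ℕ) : MvPolynomial (Fin 2) ℚ)
            * ((X 0 * X 1)^(i+1) * (X 0 + X 1)^(m + 1 - 2*(i+1))))
        = ∑ i ∈ Finset.range (m+2),
            (if i = 0 then 0 else ((g m (i-1) : ℕ) : MvPolynomial (Fin 2) ℚ)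
              * (((4*(m-2*(i-1)) : ℕ) : MvPolynomial (Fin 2) ℚ)
                * ((X 0 * X 1)^i * (X 0 + X 1)^(m + 1 - 2*i)))) := by
      rw [Finset.sum_range_succ' (n := m+1)]
      norm_num
    rw [hS1, hS2, ← Finset.sum_add_distrib]
    apply Finset.sum_congr rfl
    intro i _
    cases i with
    | zero =>
      simp only [if_pos rfl, add_zero]
      rw [show g (m+1) 0 = g m 0 from rfl]
      push_cast
      ring
    | succ j =>
      simp only [if_neg (Nat.succ_ne_zero _), Nat.add_sub_cancel]
      rw [show g (m+1) (j+1) = (2*j+3) * g m (j+1) + 4*(m-2*j) * g m j from rfl]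
      push_cast
      ring

def gammaZ (n : ℕ) (i : ℤ) : ℕ := if 0 ≤ i then g n i.toNat else 0

lemma gammaZ_neg {n : ℕ} {i : ℤ} (h : i < 0) : gammaZ n i = 0 := by
  unfold gammaZ
  rw [if_neg (by omega)]

lemma gammaZ_natCast (n i : ℕ) : gammaZ n (i : ℤ) = g n i := by
  unfold gammaZ
  rw [if_pos (Int.natCast_nonneg i)]
  simp

lemma gammaZ_rec (n : ℕ) (i : ℤ) :
    (gammaZ (n+1) i : ℤ) = (2*i+1) * gammaZ n i + 4*((n : ℤ) - 2*i + 2) * gammaZ n (i-1) := by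
  rcases lt_trichotomy i 0 with hi | hi | hi
  · rw [gammaZ_neg hi, gammaZ_neg hi, gammaZ_neg (by omega)]
    push_cast
    ring
  · subst hi
    unfold gammaZ
    rw [if_pos le_rfl, if_pos le_rfl, if_neg (by omega)]
    simp only [Int.toNat_zero]
    rw [show g (n+1) 0 = g n 0 from rfl]
    push_cast
    ring
  · obtain ⟨j, rfl⟩ : ∃ j : ℕ, i = (j:ℤ) + 1 := ⟨(i-1).toNat, by omega⟩
    unfold gammaZ
    rw [if_pos (by omega), if_pos (by omega), if_pos (by omega)]
    rw [show ((j:ℤ)+1).toNat = j+1 by omega, show ((j:ℤ)+1-1).toNat = j by omega]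
    rw [show g (n+1) (j+1) = (2*j+3) * g n (j+1) + 4*(n-2*j) * g n j from rfl]
    by_cases h : 2*j ≤ n
    · push_cast
      rw [show ((n - 2*j : ℕ) : ℤ) = (n:ℤ) - 2*(j:ℤ) by omega]
      ring
    · have h0 : g n j = 0 := by
        by_contra hg
        have := g_supp n j hg
        omega
      rw [h0, show n - 2*j = 0 by omega]
      push_cast
      ring

end TypeBAux

theorem typeB_recurrence_and_gamma :
    (∀ n : ℕ, Bbiv (n+1) = (MvPolynomial.X 0 + MvPolynomial.X 1) * Bbiv n
      + 2 * (MvPolynomial.X 0 * MvPolynomial.X 1 * Dop (Bbiv n))) ∧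
    ∃ γ : ℕ → ℤ → ℕ,
      (∀ n : ℕ, ∀ i : ℤ, i < 0 → γ n i = 0) ∧
      (∀ n : ℕ, Bbiv n =
        ∑ i ∈ Finset.range (n/2 + 1), (γ n (i : ℤ) : MvPolynomial (Fin 2) ℚ) *
          ((MvPolynomial.X 0 * MvPolynomial.X 1)^i *
            (MvPolynomial.X 0 + MvPolynomial.X 1)^(n - 2*i))) ∧
      (∀ n : ℕ, ∀ i : ℤ,
        (γ (n+1) i : ℤ) = (2*i+1) * γ n i + 4*((n : ℤ) - 2*i + 2) * γ n (i-1)) := by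
  refine ⟨TypeBAux.Bbiv_succ, TypeBAux.gammaZ, fun n i hi => TypeBAux.gammaZ_neg hi, ?_,
    fun n i => TypeBAux.gammaZ_rec n i⟩
  intro n
  rw [TypeBAux.Bbiv_expand]
  simp only [TypeBAux.gammaZ_natCast]
  refine (Finset.sum_subset (Finset.range_subset_range.mpr (by omega)) ?_).symm
  intro x hx hnx
  rw [Finset.mem_range] at hx hnx
  have hg : TypeBAux.g n x = 0 := by
    by_contra h
    have := TypeBAux.g_supp n x h
    omega
  rw [hg]
  simp
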